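/- Fix integers d₁, d₂ ≥ 0 with d = d₁ + d₂, and identify a splitting of a full flag of length d in a d-dimensional space into two full flags of dimensions d₁ and d₂ with a subset I ⊆ {1,…,d} of size d₁, where the k-th step of the first flag jumps exactly when k ∈ I. For such I define v₁ᵏ := #(I ∩ {1,…,k-1}) and v₂ᵏ := (k-1) - v₁ᵏ for 1 ≤ k ≤ d+1, and set ext⁺(I) := Σ_{k=1}^{d} v₁ᵏ·v₂^{k+1} and ext⁻(I) := Σ_{k=1}^{d} v₂ᵏ·v₁^{k+1}. Then as I ranges over all d₁-element subsets of {1,…,d}, the set of values ext⁺(I) - ext⁻(I) is exactly {-d₁d₂, -d₁d₂+2, …, d₁d₂-2, d₁d₂}, i.e. all integers of absolute value at most d₁d₂ that are congruent to d₁d₂ mod 2. -/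

import Mathlib

/-- v₁ᵏ = #(I ∩ {1,…,k-1}): dimension of the k-th step of the first flag. -/
def v1 (I : Finset ℕ) (k : ℕ) : ℤ := ((I.filter fun i => i < k).card : ℤ)

/-- v₂ᵏ = (k-1) - v₁ᵏ: dimension of the k-th step of the second flag. -/
def v2 (I : Finset ℕ) (k : ℕ) : ℤ := (k : ℤ) - 1 - v1 I k

/-- ext⁺(I) = Σ_{k=1}^{d} v₁ᵏ·v₂^{k+1}  (= dim Ext_Q(V₁•,V₂•) up to common terms). -/
def extP (d : ℕ) (I : Finset ℕ) : ℤ := ∑ k ∈ Finset.Icc 1 d, v1 I k * v2 I (k + 1)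

/-- ext⁻(I) = Σ_{k=1}^{d} v₂ᵏ·v₁^{k+1}  (= dim Ext_Q(V₂•,V₁•) up to common terms). -/
def extM (d : ℕ) (I : Finset ℕ) : ℤ := ∑ k ∈ Finset.Icc 1 d, v2 I k * v1 I (k + 1)


lemma edr_inner_sum (d i : ℕ) (h1 : 1 ≤ i) (h2 : i ≤ d) :
    ∑ k ∈ Finset.Icc 1 d, ((k:ℤ) * (if i < k then 1 else 0)
      - ((k:ℤ) - 1) * (if i < k + 1 then 1 else 0)) = (d:ℤ) + 1 - 2*i := by
  induction d, h2 using Nat.le_induction with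
  | base =>
    rw [Finset.sum_eq_single_of_mem i (Finset.mem_Icc.mpr ⟨h1, le_refl i⟩)]
    · rw [if_neg (lt_irrefl i), if_pos (Nat.lt_succ_self i)]
      ring
    · intro k hk hne
      have hk' := Finset.mem_Icc.mp hk
      rw [if_neg (by omega), if_neg (by omega)]
      ring
  | succ d hd ih =>
    rw [Finset.sum_Icc_succ_top (by omega)]
    rw [if_pos (by omega), if_pos (by omega)]
    push_cast
    push_cast at ih
    linarith

lemma edr_gauss (n : ℕ) : 2 * ∑ j ∈ Finset.range n, ((j:ℤ)+1) = (n:ℤ)*((n:ℤ)+1) := by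
  induction n with
  | zero => simp
  | succ n ih =>
    rw [Finset.sum_range_succ]
    push_cast
    linear_combination ih

lemma edr_key (d : ℕ) (I : Finset ℕ) (hI : I ⊆ Finset.Icc 1 d) :
    extP d I - extM d I = (I.card : ℤ) * ((d:ℤ)+1) - 2 * ∑ i ∈ I, (i:ℤ) := by
  have hv1 : ∀ k, v1 I k = ∑ i ∈ I, (if i < k then (1:ℤ) else 0) := by
    intro k
    rw [v1, Finset.card_filter]
    push_cast
    rfl
  rw [extP, extM, ← Finset.sum_sub_distrib]
  have e1 : ∑ k ∈ Finset.Icc 1 d, (v1 I k * v2 I (k + 1) - v2 I k * v1 I (k + 1))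
      = ∑ k ∈ Finset.Icc 1 d, ∑ i ∈ I,
        ((k:ℤ) * (if i < k then 1 else 0) - ((k:ℤ) - 1) * (if i < k + 1 then 1 else 0)) := by
    refine Finset.sum_congr rfl fun k _ => ?_
    have h2 : v2 I (k+1) = (k:ℤ) - v1 I (k+1) := by rw [v2]; push_cast; ring
    have h3 : v2 I k = (k:ℤ) - 1 - v1 I k := rfl
    rw [h2, h3, Finset.sum_sub_distrib, ← Finset.mul_sum, ← Finset.mul_sum, ← hv1, ← hv1]
    ring
  rw [e1, Finset.sum_comm]
  have e2 : ∑ i ∈ I, ∑ k ∈ Finset.Icc 1 d,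
      ((k:ℤ) * (if i < k then 1 else 0) - ((k:ℤ) - 1) * (if i < k + 1 then 1 else 0))
      = ∑ i ∈ I, ((d:ℤ) + 1 - 2*i) := by
    refine Finset.sum_congr rfl fun i hi => ?_
    have hm := Finset.mem_Icc.mp (hI hi)
    exact edr_inner_sum d i hm.1 hm.2
  rw [e2]
  simp only [Finset.sum_sub_distrib, Finset.sum_add_distrib, Finset.sum_const, nsmul_eq_mul,
    ← Finset.mul_sum]
  ring


lemma edr_sum_lower : ∀ (n : ℕ) (S : Finset ℕ), S.card = n → (∀ i ∈ S, 1 ≤ i) →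
    ∑ j ∈ Finset.range n, (j+1) ≤ ∑ i ∈ S, i := by
  intro n
  induction n with
  | zero => intro S h _; simp
  | succ n ih =>
    intro S hcard hpos
    have hne : S.Nonempty := Finset.card_pos.mp (by omega)
    have hMem := S.max'_mem hne
    set M := S.max' hne with hM
    have hsub : S ⊆ Finset.Icc 1 M := fun i hi => Finset.mem_Icc.mpr ⟨hpos i hi, S.le_max' i hi⟩
    have hcardle : n + 1 ≤ M := by
      have h := Finset.card_le_card hsub
      rw [hcard, Nat.card_Icc] at h; omega
    have herase : (S.erase M).card = n := by rw [Finset.card_erase_of_mem hMem, hcard]; omega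
    have h1 := ih (S.erase M) herase (fun i hi => hpos i (Finset.mem_of_mem_erase hi))
    have h2 : M + ∑ i ∈ S.erase M, i = ∑ i ∈ S, i := Finset.add_sum_erase S (fun x => x) hMem
    rw [Finset.sum_range_succ]
    omega

lemma edr_sum_upper : ∀ (n d : ℕ) (S : Finset ℕ), S.card = n → S ⊆ Finset.Icc 1 d →
    ∑ i ∈ S, i ≤ ∑ j ∈ Finset.range n, (d - j) := by
  intro n
  induction n with
  | zero => intro d S h _; rw [Finset.card_eq_zero] at h; simp [h]
  | succ n ih =>
    intro d S hcard hsub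
    have hne : S.Nonempty := Finset.card_pos.mp (by omega)
    have hMem := S.max'_mem hne
    set M := S.max' hne with hM
    have hMd : M ≤ d := (Finset.mem_Icc.mp (hsub hMem)).2
    have herase : (S.erase M).card = n := by rw [Finset.card_erase_of_mem hMem, hcard]; omega
    have hsub' : S.erase M ⊆ Finset.Icc 1 (d-1) := by
      intro i hi
      have h1 := Finset.mem_Icc.mp (hsub (Finset.mem_of_mem_erase hi))
      have h2 : i ≤ M := S.le_max' i (Finset.mem_of_mem_erase hi)
      have h3 : i ≠ M := Finset.ne_of_mem_erase hi
      exact Finset.mem_Icc.mpr ⟨h1.1, by omega⟩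
    have h1 := ih (d-1) (S.erase M) herase hsub'
    have h2 : M + ∑ i ∈ S.erase M, i = ∑ i ∈ S, i := Finset.add_sum_erase S (fun x => x) hMem
    rw [Finset.sum_range_succ']
    have h3 : ∑ j ∈ Finset.range n, (d - (j+1)) = ∑ j ∈ Finset.range n, (d - 1 - j) :=
      Finset.sum_congr rfl (fun j _ => by omega)
    rw [h3]
    omega

lemma edr_icc_sum (a n : ℕ) :
    ∑ i ∈ Finset.Icc (a+1) (a+n), i = (∑ j ∈ Finset.range n, (j+1)) + n * a := by
  induction n with
  | zero => simp
  | succ n ih =>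
    have he : a + (n+1) = (a + n) + 1 := by omega
    rw [he, Finset.sum_Icc_succ_top (by omega), Finset.sum_range_succ, ih]
    have : (n+1)*a = n*a + a := by ring
    omega

lemma edr_exists_I (d1 d2 : ℕ) : ∀ t, t ≤ d1 * d2 → ∃ I : Finset ℕ,
    I ⊆ Finset.Icc 1 (d1+d2) ∧ I.card = d1 ∧
    ∑ i ∈ I, i = (∑ j ∈ Finset.range d1, (j+1)) + t := by
  intro t
  induction t with
  | zero =>
    intro _
    refine ⟨Finset.Icc 1 d1, Finset.Icc_subset_Icc_right (Nat.le_add_right _ _), ?_, ?_⟩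
    · rw [Nat.card_Icc]; omega
    · have := edr_icc_sum 0 d1
      simpa using this
  | succ t ih =>
    intro h
    obtain ⟨I, hsub, hcard, hsum⟩ := ih (by omega)
    by_cases hex : ∃ i ∈ I, i + 1 ≤ d1 + d2 ∧ i + 1 ∉ I
    · obtain ⟨i, hi, hle, hni⟩ := hex
      refine ⟨insert (i+1) (I.erase i), ?_, ?_, ?_⟩
      · intro j hj
        rcases Finset.mem_insert.mp hj with rfl | hj'
        · exact Finset.mem_Icc.mpr ⟨by omega, hle⟩
        · exact hsub (Finset.mem_of_mem_erase hj')
      · rw [Finset.card_insert_of_notMem (fun hmem => hni (Finset.mem_of_mem_erase hmem)),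
          Finset.card_erase_of_mem hi]
        have : 1 ≤ I.card := Finset.card_pos.mpr ⟨i, hi⟩
        omega
      · rw [Finset.sum_insert (fun hmem => hni (Finset.mem_of_mem_erase hmem))]
        have h2 : i + ∑ x ∈ I.erase i, x = ∑ x ∈ I, x := Finset.add_sum_erase I (fun x => x) hi
        omega
    · exfalso
      push_neg at hex
      have hd1 : 1 ≤ d1 := by
        rcases Nat.eq_zero_or_pos d1 with h0 | h0
        · rw [h0, Nat.zero_mul] at h; omega
        · exact h0
      have hd2 : 1 ≤ d2 := by
        rcases Nat.eq_zero_or_pos d2 with h0 | h0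
        · rw [h0, Nat.mul_zero] at h; omega
        · exact h0
      have hne : I.Nonempty := Finset.card_pos.mp (by omega)
      have hchain : ∀ n j, j ∈ I → j + n ≤ d1 + d2 → j + n ∈ I := by
        intro n
        induction n with
        | zero => intro j hj _; simpa using hj
        | succ n ihn =>
          intro j hj hle
          have h1 := ihn j hj (by omega)
          have h2 := hex (j+n) h1 (by omega)
          have : j + n + 1 = j + (n+1) := by omega
          rwa [this] at h2
      set m := I.min' hne with hm
      have hmem := I.min'_mem hne
      have hIcc : I = Finset.Icc m (d1 + d2) := by
        apply Finset.Subset.antisymm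
        · intro j hj
          exact Finset.mem_Icc.mpr ⟨I.min'_le j hj, (Finset.mem_Icc.mp (hsub hj)).2⟩
        · intro j hj
          obtain ⟨ha, hb⟩ := Finset.mem_Icc.mp hj
          have := hchain (j - m) m hmem (by omega)
          have he : m + (j - m) = j := by omega
          rwa [he] at this
      have hm1 : 1 ≤ m := (Finset.mem_Icc.mp (hsub hmem)).1
      have hmv : m = d2 + 1 := by
        have := hcard
        rw [hIcc, Nat.card_Icc] at this
        omega
      have hsum2 : ∑ i ∈ I, i = (∑ j ∈ Finset.range d1, (j+1)) + d1 * d2 := by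
        rw [hIcc, hmv]
        have : d1 + d2 = d2 + d1 := by omega
        rw [this]
        exact edr_icc_sum d2 d1
      omega

/-- As I ranges over d₁-element subsets of {1,…,d} (d = d₁+d₂), the values
ext⁺(I) - ext⁻(I) are exactly the integers m with |m| ≤ d₁d₂ and m ≡ d₁d₂ (mod 2). -/
theorem extDiff_range (d1 d2 : ℕ) :
    {m : ℤ | ∃ I : Finset ℕ, I ⊆ Finset.Icc 1 (d1 + d2) ∧ I.card = d1 ∧
        extP (d1 + d2) I - extM (d1 + d2) I = m}
      = {m : ℤ | m.natAbs ≤ d1 * d2 ∧ m ≡ (d1 * d2 : ℤ) [ZMOD 2]} := by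
  have hcast : ((d1 * d2 : ℕ) : ℤ) = (d1:ℤ) * (d2:ℤ) := by push_cast; ring
  have gL : 2 * ((∑ j ∈ Finset.range d1, (j+1) : ℕ) : ℤ) = (d1:ℤ)*((d1:ℤ)+1) := by
    push_cast
    exact edr_gauss d1
  have gj : 2 * ∑ j ∈ Finset.range d1, (j:ℤ) = (d1:ℤ)*(d1:ℤ) - (d1:ℤ) := by
    have h := edr_gauss d1
    rw [Finset.sum_add_distrib, Finset.sum_const, Finset.card_range, nsmul_eq_mul] at h
    linarith
  ext m
  simp only [Set.mem_setOf_eq]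
  constructor
  · rintro ⟨I, hsub, hcard, heq⟩
    have hkey := edr_key (d1+d2) I hsub
    rw [hcard, heq] at hkey
    push_cast at hkey
    have hScast : ∑ i ∈ I, (i:ℤ) = ((∑ i ∈ I, i : ℕ) : ℤ) := by push_cast; rfl
    have hlow := edr_sum_lower d1 I hcard (fun i hi => (Finset.mem_Icc.mp (hsub hi)).1)
    have hupp := edr_sum_upper d1 (d1+d2) I hcard hsub
    have hlowZ : ((∑ j ∈ Finset.range d1, (j+1) : ℕ) : ℤ) ≤ ∑ i ∈ I, (i:ℤ) := by
      rw [hScast]; exact_mod_cast hlow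
    have gU : 2 * ((∑ j ∈ Finset.range d1, (d1 + d2 - j) : ℕ) : ℤ)
        = 2*(d1:ℤ)*((d1:ℤ)+(d2:ℤ)) - ((d1:ℤ)*(d1:ℤ) - (d1:ℤ)) := by
      have h1 : ((∑ j ∈ Finset.range d1, (d1 + d2 - j) : ℕ) : ℤ)
          = ∑ j ∈ Finset.range d1, ((d1:ℤ) + (d2:ℤ) - (j:ℤ)) := by
        rw [Nat.cast_sum]
        refine Finset.sum_congr rfl fun j hj => ?_
        have := Finset.mem_range.mp hj
        rw [Nat.cast_sub (by omega)]
        push_cast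
        ring
      rw [h1, Finset.sum_sub_distrib, Finset.sum_const, Finset.card_range, nsmul_eq_mul]
      linarith
    have huppZ : ∑ i ∈ I, (i:ℤ) ≤ ((∑ j ∈ Finset.range d1, (d1 + d2 - j) : ℕ) : ℤ) := by
      rw [hScast]; exact_mod_cast hupp
    have hb1 : m ≤ (d1:ℤ) * (d2:ℤ) := by linarith [hkey, gL, hlowZ]
    have hb2 : -((d1:ℤ) * (d2:ℤ)) ≤ m := by linarith [hkey, gU, huppZ]
    constructor
    · rw [← hcast] at hb1 hb2
      omega
    · obtain ⟨k, hk⟩ := Int.even_mul_succ_self (d1:ℤ)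
      rw [Int.modEq_iff_dvd]
      exact ⟨∑ i ∈ I, (i:ℤ) - k, by linarith [hkey, hk]⟩
  · rintro ⟨habs, hmod⟩
    rw [Int.ModEq] at hmod
    have hb : -((d1*d2 : ℕ) : ℤ) ≤ m ∧ m ≤ ((d1*d2 : ℕ) : ℤ) := by omega
    obtain ⟨c, hc⟩ : ∃ c : ℤ, (d1:ℤ) * (d2:ℤ) - m = 2 * c := by
      refine ⟨((d1:ℤ) * (d2:ℤ) - m)/2, ?_⟩
      rw [← hcast] at hmod ⊢
      omega
    have hc0 : 0 ≤ c := by rw [← hcast] at hc; omega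
    have hcle : c.toNat ≤ d1 * d2 := by rw [← hcast] at hc; omega
    obtain ⟨I, hsub, hcard, hsum⟩ := edr_exists_I d1 d2 c.toNat hcle
    refine ⟨I, hsub, hcard, ?_⟩
    rw [edr_key _ I hsub, hcard]
    have hS : ∑ i ∈ I, (i:ℤ) = ((∑ j ∈ Finset.range d1, (j+1) : ℕ) : ℤ) + (c.toNat : ℤ) := by
      have : ∑ i ∈ I, (i:ℤ) = ((∑ i ∈ I, i : ℕ) : ℤ) := by push_cast; rfl
      rw [this, hsum]
      push_cast
      ring
    have ht : (c.toNat : ℤ) = c := Int.toNat_of_nonneg hc0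
    push_cast
    linarith [gL, hS, hc, ht]
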